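/- arXiv:2009.12529 — 3 statements merged into one kernel-verified Lean document; each statement's English description precedes it below -/
import Mathlib

section
/- Let f : ℝ → ℝ be six times continuously differentiable on [x − h, x + h] for some x ∈ ℝ and h > 0, and suppose |f^{(k)}(y)| ≤ K for all y ∈ [x − h, x + h] and 0 ≤ k ≤ 6. Then, with δ_x² F = (f(x+h) − 2f(x) + f(x−h))/h² and δ_x² G = (f''(x+h) − 2f''(x) + f''(x−h))/h², one has |f''(x) − (δ_x² F − (h²/12)·δ_x² G)| ≤ K·h⁴. (Lemma 3, third expansion: three-point fourth-order compact approximation of the second derivative; the C⁶ regularity is the hypothesis needed for the O(h⁴) bound.) -/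
open Finset

namespace BBMB

/-- A periodic grid function with period `M`. -/
def Periodic (M : ℕ) (u : ℤ → ℝ) : Prop := ∀ i : ℤ, u (i + (M : ℤ)) = u i

/-- Forward difference `δ_x u_{i+1/2} = (u_{i+1} - u_i)/h`. -/
noncomputable def dxp (h : ℝ) (u : ℤ → ℝ) (i : ℤ) : ℝ := (u (i + 1) - u i) / h

/-- Backward difference `δ_x u_{i-1/2} = (u_i - u_{i-1})/h`. -/
noncomputable def dxm (h : ℝ) (u : ℤ → ℝ) (i : ℤ) : ℝ := (u i - u (i - 1)) / h

/-- Second difference `δ_x² u_i = (u_{i+1} - 2 u_i + u_{i-1})/h²`. -/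
noncomputable def dxx (h : ℝ) (u : ℤ → ℝ) (i : ℤ) : ℝ :=
  (u (i + 1) - 2 * u i + u (i - 1)) / h ^ 2

/-- Centered difference `Δ_x u_i = (u_{i+1} - u_{i-1})/(2h)`. -/
noncomputable def Dx (h : ℝ) (u : ℤ → ℝ) (i : ℤ) : ℝ := (u (i + 1) - u (i - 1)) / (2 * h)

/-- Discrete inner product `(u, w) = h ∑_{i=1}^{M} u_i w_i`. -/
noncomputable def ip (M : ℕ) (h : ℝ) (u w : ℤ → ℝ) : ℝ :=
  h * ∑ i ∈ Finset.Icc (1 : ℤ) (M : ℤ), u i * w i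

/-- Discrete inner product `⟨δ_x u, δ_x w⟩ = h ∑_{i=1}^{M} (δ_x u_{i-1/2})(δ_x w_{i-1/2})`. -/
noncomputable def dip (M : ℕ) (h : ℝ) (u w : ℤ → ℝ) : ℝ :=
  h * ∑ i ∈ Finset.Icc (1 : ℤ) (M : ℤ), dxm h u i * dxm h w i

/-- Discrete `L²` norm `‖u‖ = √((u,u))`. -/
noncomputable def nrm (M : ℕ) (h : ℝ) (u : ℤ → ℝ) : ℝ := Real.sqrt (ip M h u u)

/-- Discrete `H¹` seminorm `|u|₁ = √(⟨δ_x u, δ_x u⟩)`. -/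
noncomputable def snorm (M : ℕ) (h : ℝ) (u : ℤ → ℝ) : ℝ := Real.sqrt (dip M h u u)

/-- Trilinear term `ψ(u,v)_i = (1/3) (u_i Δ_x v_i + Δ_x (u·v)_i)`. -/
noncomputable def psi (h : ℝ) (u v : ℤ → ℝ) (i : ℤ) : ℝ :=
  (1 / 3) * (u i * Dx h v i + Dx h (fun j => u j * v j) i)

private lemma taylor5_expand (f : ℝ → ℝ) (s : Set ℝ) (a y : ℝ) :
    taylorWithinEval f 5 s a y =
      iteratedDerivWithin 0 f s a + (y - a) * iteratedDerivWithin 1 f s a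
      + (y - a) ^ 2 / 2 * iteratedDerivWithin 2 f s a
      + (y - a) ^ 3 / 6 * iteratedDerivWithin 3 f s a
      + (y - a) ^ 4 / 24 * iteratedDerivWithin 4 f s a
      + (y - a) ^ 5 / 120 * iteratedDerivWithin 5 f s a := by
  rw [taylor_within_apply]
  simp [Finset.sum_range_succ]
  norm_num [Nat.factorial]
  ring

private lemma taylor3_expand (f : ℝ → ℝ) (s : Set ℝ) (a y : ℝ) :
    taylorWithinEval f 3 s a y =
      iteratedDerivWithin 0 f s a + (y - a) * iteratedDerivWithin 1 f s a
      + (y - a) ^ 2 / 2 * iteratedDerivWithin 2 f s a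
      + (y - a) ^ 3 / 6 * iteratedDerivWithin 3 f s a := by
  rw [taylor_within_apply]
  simp [Finset.sum_range_succ]
  norm_num [Nat.factorial]
  ring

private lemma iter_iter (f : ℝ → ℝ) (s : Set ℝ) (hu : UniqueDiffOn ℝ s) (k : ℕ) :
    ∀ y ∈ s, iteratedDerivWithin k (iteratedDerivWithin 2 f s) s y
      = iteratedDerivWithin (k + 2) f s y := by
  induction k with
  | zero => intro y hy; simp
  | succ k ih =>
    intro y hy
    show _ = iteratedDerivWithin (k + 2 + 1) f s y
    rw [iteratedDerivWithin_succ (n := k), iteratedDerivWithin_succ (n := k + 2)]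
    exact derivWithin_congr ih (ih y hy)

private lemma contDiffOn_iter2 (f : ℝ → ℝ) (s : Set ℝ) (hu : UniqueDiffOn ℝ s)
    (hf : ContDiffOn ℝ 6 f s) : ContDiffOn ℝ 4 (iteratedDerivWithin 2 f s) s := by
  have h1 : ContDiffOn ℝ 5 (derivWithin f s) s := hf.derivWithin hu (by norm_num)
  have h2 : ContDiffOn ℝ 4 (derivWithin (derivWithin f s) s) s := h1.derivWithin hu (by norm_num)
  refine h2.congr fun y hy => ?_
  rw [iteratedDerivWithin_succ]
  exact derivWithin_congr (fun z hz => congrFun iteratedDerivWithin_one z)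
    (congrFun iteratedDerivWithin_one y)


/-- Lemma 3, third expansion: three-point fourth-order compact approximation of `f''`. -/
theorem compact_second_derivative (f : ℝ → ℝ) (x h K : ℝ) (hh : 0 < h)
    (hf : ContDiffOn ℝ 6 f (Set.Icc (x - h) (x + h)))
    (hK : ∀ y ∈ Set.Icc (x - h) (x + h), ∀ k : ℕ, k ≤ 6 →
      |iteratedDerivWithin k f (Set.Icc (x - h) (x + h)) y| ≤ K) :
    |iteratedDerivWithin 2 f (Set.Icc (x - h) (x + h)) x -
        ((f (x + h) - 2 * f x + f (x - h)) / h ^ 2 -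
          h ^ 2 / 12 *
            ((iteratedDerivWithin 2 f (Set.Icc (x - h) (x + h)) (x + h) -
                2 * iteratedDerivWithin 2 f (Set.Icc (x - h) (x + h)) x +
                iteratedDerivWithin 2 f (Set.Icc (x - h) (x + h)) (x - h)) /
              h ^ 2))| ≤ K * h ^ 4 := by
  have hab : x - h ≤ x + h := by linarith
  set s := Set.Icc (x - h) (x + h) with hs
  have hu : UniqueDiffOn ℝ s := uniqueDiffOn_Icc (by linarith)
  have hxm : x ∈ s := Set.mem_Icc.2 ⟨by linarith, by linarith⟩
  have ham : x - h ∈ s := Set.mem_Icc.2 ⟨le_refl _, by linarith⟩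
  have hbm : x + h ∈ s := Set.mem_Icc.2 ⟨by linarith, le_refl _⟩
  have hK0 : 0 ≤ K := (abs_nonneg _).trans (hK x hxm 0 (by norm_num))
  set g := iteratedDerivWithin 2 f s with hg
  have hgk := iter_iter f s hu
  have hg4 : ContDiffOn ℝ 4 g s := contDiffOn_iter2 f s hu hf
  set D : ℕ → ℝ := fun k => iteratedDerivWithin k f s (x - h) with hD
  -- Taylor remainder bounds for f (order 5)
  have hf6 : ContDiffOn ℝ ((5 : ℕ) + 1) f s := by exact_mod_cast hf
  have hC6 : ∀ y ∈ s, ‖iteratedDerivWithin ((5 : ℕ) + 1) f s y‖ ≤ K := fun y hy => by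
    rw [Real.norm_eq_abs]; exact hK y hy 6 le_rfl
  have hR1 := taylor_mean_remainder_bound (n := 5) hab hf6 hxm hC6
  have hR2 := taylor_mean_remainder_bound (n := 5) hab hf6 hbm hC6
  -- Taylor remainder bounds for g (order 3)
  have hg4' : ContDiffOn ℝ ((3 : ℕ) + 1) g s := by exact_mod_cast hg4
  have hC4 : ∀ y ∈ s, ‖iteratedDerivWithin ((3 : ℕ) + 1) g s y‖ ≤ K := fun y hy => by
    rw [Real.norm_eq_abs, hgk 4 y hy]; exact hK y hy 6 le_rfl
  have hS1 := taylor_mean_remainder_bound (n := 3) hab hg4' hxm hC4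
  have hS2 := taylor_mean_remainder_bound (n := 3) hab hg4' hbm hC4
  set r1 := f x - taylorWithinEval f 5 s (x - h) x with hr1
  set r2 := f (x + h) - taylorWithinEval f 5 s (x - h) (x + h) with hr2
  set s1 := g x - taylorWithinEval g 3 s (x - h) x with hs1
  set s2 := g (x + h) - taylorWithinEval g 3 s (x - h) (x + h) with hs2
  rw [Real.norm_eq_abs] at hR1 hR2 hS1 hS2
  have hxx : x - (x - h) = h := by ring
  have hxx2 : x + h - (x - h) = 2 * h := by ring
  rw [hxx] at hR1 hS1
  rw [hxx2] at hR2 hS2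
  have b1 : |r1| ≤ K * h ^ 6 / 120 := by
    refine hR1.trans_eq ?_; norm_num [Nat.factorial]
  have b2 : |r2| ≤ 64 * K * h ^ 6 / 120 := by
    refine hR2.trans_eq ?_; norm_num [Nat.factorial]; ring
  have b3 : |s1| ≤ K * h ^ 4 / 6 := by
    refine hS1.trans_eq ?_; norm_num [Nat.factorial]
  have b4 : |s2| ≤ 16 * K * h ^ 4 / 6 := by
    refine hS2.trans_eq ?_; norm_num [Nat.factorial]; ring
  -- the key algebraic identity
  have hf0 : f (x - h) = D 0 := by simp [hD]
  have hgm : g (x - h) = D 2 := rfl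
  have hT1 : taylorWithinEval f 5 s (x - h) x =
      D 0 + (x - (x - h)) * D 1 + (x - (x - h)) ^ 2 / 2 * D 2 + (x - (x - h)) ^ 3 / 6 * D 3
      + (x - (x - h)) ^ 4 / 24 * D 4 + (x - (x - h)) ^ 5 / 120 * D 5 :=
    taylor5_expand f s (x - h) x
  have hT2 : taylorWithinEval f 5 s (x - h) (x + h) =
      D 0 + (x + h - (x - h)) * D 1 + (x + h - (x - h)) ^ 2 / 2 * D 2
      + (x + h - (x - h)) ^ 3 / 6 * D 3 + (x + h - (x - h)) ^ 4 / 24 * D 4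
      + (x + h - (x - h)) ^ 5 / 120 * D 5 :=
    taylor5_expand f s (x - h) (x + h)
  have hT3 : taylorWithinEval g 3 s (x - h) x =
      D 2 + (x - (x - h)) * D 3 + (x - (x - h)) ^ 2 / 2 * D 4 + (x - (x - h)) ^ 3 / 6 * D 5 := by
    rw [taylor3_expand g s (x - h) x, hgk 0 _ ham, hgk 1 _ ham, hgk 2 _ ham, hgk 3 _ ham]
  have hT4 : taylorWithinEval g 3 s (x - h) (x + h) =
      D 2 + (x + h - (x - h)) * D 3 + (x + h - (x - h)) ^ 2 / 2 * D 4
      + (x + h - (x - h)) ^ 3 / 6 * D 5 := by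
    rw [taylor3_expand g s (x - h) (x + h), hgk 0 _ ham, hgk 1 _ ham, hgk 2 _ ham, hgk 3 _ ham]
  have hfx : f x = taylorWithinEval f 5 s (x - h) x + r1 := by rw [hr1]; ring
  have hfb : f (x + h) = taylorWithinEval f 5 s (x - h) (x + h) + r2 := by rw [hr2]; ring
  have hgx : g x = taylorWithinEval g 3 s (x - h) x + s1 := by rw [hs1]; ring
  have hgb : g (x + h) = taylorWithinEval g 3 s (x - h) (x + h) + s2 := by rw [hs2]; ring
  have hne : h ≠ 0 := ne_of_gt hh
  have key : g x - ((f (x + h) - 2 * f x + f (x - h)) / h ^ 2 -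
      h ^ 2 / 12 * ((g (x + h) - 2 * g x + g (x - h)) / h ^ 2)) =
      s1 + (2 * r1 - r2) / h ^ 2 + (s2 - 2 * s1) / 12 := by
    rw [hfx, hfb, hgx, hgb, hf0, hgm, hT1, hT2, hT3, hT4]
    field_simp
    ring
  rw [key]
  have h2pos : (0 : ℝ) < h ^ 2 := by positivity
  have c2 : |2 * r1 - r2| / h ^ 2 ≤ 66 * K * h ^ 4 / 120 := by
    have e : |2 * r1 - r2| ≤ 66 * K * h ^ 6 / 120 := by
      calc |2 * r1 - r2| ≤ |2 * r1| + |r2| := abs_sub _ _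
        _ = 2 * |r1| + |r2| := by rw [abs_mul]; norm_num
        _ ≤ 66 * K * h ^ 6 / 120 := by linarith
    calc |2 * r1 - r2| / h ^ 2 ≤ (66 * K * h ^ 6 / 120) / h ^ 2 := by gcongr
      _ = 66 * K * h ^ 4 / 120 := by field_simp
  have c3 : |s2 - 2 * s1| / 12 ≤ 18 * K * h ^ 4 / 72 := by
    have e : |s2 - 2 * s1| ≤ 18 * K * h ^ 4 / 6 := by
      calc |s2 - 2 * s1| ≤ |s2| + |2 * s1| := abs_sub _ _
        _ = |s2| + 2 * |s1| := by rw [abs_mul]; norm_num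
        _ ≤ 18 * K * h ^ 4 / 6 := by linarith
    linarith
  have hKh : 0 ≤ K * h ^ 4 := mul_nonneg hK0 (by positivity)
  calc |s1 + (2 * r1 - r2) / h ^ 2 + (s2 - 2 * s1) / 12|
      ≤ |s1| + |(2 * r1 - r2) / h ^ 2| + |(s2 - 2 * s1) / 12| := abs_add_three _ _ _
    _ = |s1| + |2 * r1 - r2| / h ^ 2 + |s2 - 2 * s1| / 12 := by
        rw [abs_div, abs_div, abs_of_pos h2pos]; norm_num
    _ ≤ K * h ^ 4 / 6 + 66 * K * h ^ 4 / 120 + 18 * K * h ^ 4 / 72 := by linarith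
    _ ≤ K * h ^ 4 := by linarith

end BBMB
end

section
/- There exists an absolute constant C > 0 with the following property. Let f : ℝ → ℝ be five times continuously differentiable on [x − h, x + h] for some x ∈ ℝ and h > 0, and suppose |f^{(k)}(y)| ≤ K for all y ∈ [x − h, x + h] and 0 ≤ k ≤ 5. Then, setting ψ(F,F)(x) = (1/3)·[f(x)·(f(x+h) − f(x−h))/(2h) + (f(x+h)² − f(x−h)²)/(2h)] and ψ(G,F)(x) = (1/3)·[f''(x)·(f(x+h) − f(x−h))/(2h) + (f''(x+h)·f(x+h) − f''(x−h)·f(x−h))/(2h)], one has |f(x)·f'(x) − (ψ(F,F)(x) − (h²/2)·ψ(G,F)(x))| ≤ C·K²·h⁴. (Lemma 3, first expansion: fourth-order compact approximation of the nonlinear term ff'.) -/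
open Finset

namespace BBMB

section helpers

lemma iter_comp {f : ℝ → ℝ} {s : Set ℝ} (hs : UniqueDiffOn ℝ s) (m : ℕ) :
    ∀ j : ℕ, ∀ x ∈ s, iteratedDerivWithin j (iteratedDerivWithin m f s) s x
      = iteratedDerivWithin (j + m) f s x := by
  intro j
  induction j with
  | zero => intro x hx; simp
  | succ j ih =>
    intro x hx
    rw [iteratedDerivWithin_succ,
      derivWithin_congr (fun y hy => ih y hy) (ih x hx),
      ← iteratedDerivWithin_succ]
    congr 1
    omega

lemma iter_comp' {f : ℝ → ℝ} {s : Set ℝ} (hs : UniqueDiffOn ℝ s) {m j n : ℕ}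
    (hn : j + m = n) {x : ℝ} (hx : x ∈ s) :
    iteratedDerivWithin j (iteratedDerivWithin m f s) s x = iteratedDerivWithin n f s x := by
  rw [iter_comp hs m j x hx, hn]

lemma contDiffOn_iter {f : ℝ → ℝ} {s : Set ℝ} (hs : UniqueDiffOn ℝ s) {n m i : ℕ}
    (hf : ContDiffOn ℝ n f s) (hmn : m + i ≤ n) :
    ContDiffOn ℝ m (iteratedDerivWithin i f s) s := by
  intro x hx
  have H := ContDiffWithinAt.iteratedFDerivWithin_right (n := n) (m := m) (hf x hx) hs
    (by exact_mod_cast hmn) hx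
  rw [iteratedDerivWithin_eq_equiv_comp]
  exact (((ContinuousMultilinearMap.piFieldEquiv ℝ (Fin i) ℝ).symm.contDiff).of_le
    le_top).comp_contDiffWithinAt H

lemma taylor_bd {g : ℝ → ℝ} {a b M : ℝ} (n : ℕ) (hab : a ≤ b)
    (hg : ContDiffOn ℝ (n + 1) g (Set.Icc a b)) {z : ℝ} (hz : z ∈ Set.Icc a b)
    (hM : ∀ y ∈ Set.Icc a b, |iteratedDerivWithin (n + 1) g (Set.Icc a b) y| ≤ M) :
    |g z - ∑ k ∈ Finset.range (n + 1),
        (z - a) ^ k / (Nat.factorial k : ℝ) * iteratedDerivWithin k g (Set.Icc a b) a|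
      ≤ M * (z - a) ^ (n + 1) / (Nat.factorial n : ℝ) := by
  have H := taylor_mean_remainder_bound hab hg hz (fun y hy => by
    rw [Real.norm_eq_abs]; exact hM y hy)
  rw [Real.norm_eq_abs] at H
  have e : taylorWithinEval g n (Set.Icc a b) a z
      = ∑ k ∈ Finset.range (n + 1),
          (z - a) ^ k / (Nat.factorial k : ℝ) * iteratedDerivWithin k g (Set.Icc a b) a := by
    rw [taylor_within_apply]
    refine Finset.sum_congr rfl fun k _ => ?_
    rw [smul_eq_mul]
    ring
  rw [e] at H
  exact H


lemma tb_le {h K c q v1 v2 B1 B2 : ℝ} {j p : ℕ} (hh : 0 < h) (h1 : h ≤ 1)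
    (hc : 0 < c) (hb1 : |v1| ≤ B1) (hb2 : |v2| ≤ B2)
    (heq : c * (B1 * (B2 * h ^ j)) = q * (K ^ 2 * h ^ p)) (hq : 0 ≤ q) (hp4 : 4 ≤ p) :
    |c * (v1 * (v2 * h ^ j))| ≤ q * (K ^ 2 * h ^ 4) := by
  have hB1 : 0 ≤ B1 := (abs_nonneg _).trans hb1
  have hB2 : 0 ≤ B2 := (abs_nonneg _).trans hb2
  have step1 : |c * (v1 * (v2 * h ^ j))| = c * (|v1| * (|v2| * h ^ j)) := by
    rw [abs_mul, abs_mul, abs_mul, abs_pow, abs_of_pos hh, abs_of_pos hc]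
  have step2 : c * (|v1| * (|v2| * h ^ j)) ≤ c * (B1 * (B2 * h ^ j)) := by
    refine mul_le_mul_of_nonneg_left ?_ hc.le
    exact mul_le_mul hb1 (mul_le_mul_of_nonneg_right hb2 (by positivity))
      (by positivity) hB1
  have step3 : h ^ p ≤ h ^ 4 := pow_le_pow_of_le_one hh.le h1 hp4
  have step4 : q * (K ^ 2 * h ^ p) ≤ q * (K ^ 2 * h ^ 4) := by
    have := mul_le_mul_of_nonneg_left step3 (sq_nonneg K)
    exact mul_le_mul_of_nonneg_left this hq
  rw [step1]
  exact step2.trans (heq ▸ step4)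

lemma tb_ge {h K c q v1 v2 B1 B2 : ℝ} {j p : ℕ} (hh : 0 < h) (h1 : 1 ≤ h)
    (hc : 0 < c) (hb1 : |v1| ≤ B1) (hb2 : |v2| ≤ B2)
    (heq : c * (B1 * (B2 * h ^ j)) = q * (K ^ 2 * h ^ p)) (hq : 0 ≤ q) (hp4 : p ≤ 4) :
    |c * (v1 * (v2 * h ^ j))| ≤ q * (K ^ 2 * h ^ 4) := by
  have hB1 : 0 ≤ B1 := (abs_nonneg _).trans hb1
  have hB2 : 0 ≤ B2 := (abs_nonneg _).trans hb2
  have step1 : |c * (v1 * (v2 * h ^ j))| = c * (|v1| * (|v2| * h ^ j)) := by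
    rw [abs_mul, abs_mul, abs_mul, abs_pow, abs_of_pos hh, abs_of_pos hc]
  have step2 : c * (|v1| * (|v2| * h ^ j)) ≤ c * (B1 * (B2 * h ^ j)) := by
    refine mul_le_mul_of_nonneg_left ?_ hc.le
    exact mul_le_mul hb1 (mul_le_mul_of_nonneg_right hb2 (by positivity))
      (by positivity) hB1
  have step3 : h ^ p ≤ h ^ 4 := pow_le_pow_right₀ h1 hp4
  have step4 : q * (K ^ 2 * h ^ p) ≤ q * (K ^ 2 * h ^ 4) := by
    have := mul_le_mul_of_nonneg_left step3 (sq_nonneg K)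
    exact mul_le_mul_of_nonneg_left this hq
  rw [step1]
  exact step2.trans (heq ▸ step4)

set_option maxHeartbeats 2000000 in
lemma alg1 (h K A0 A1 A2 A3 A4 FX FP D1 D2X D2P : ℝ)
    (hh : 0 < h) (h1 : h ≤ 1) (hK0 : 0 ≤ K)
    (hA0 : |A0| ≤ K) (hA1 : |A1| ≤ K) (hA2 : |A2| ≤ K) (hA3 : |A3| ≤ K) (hA4 : |A4| ≤ K)
    (hR1 : |FX - (A0 + A1 * h + A2 * h ^ 2 / 2 + A3 * h ^ 3 / 6 + A4 * h ^ 4 / 24)| ≤ K * h ^ 5 / 24)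
    (hR2 : |FP - (A0 + A1 * (2 * h) + A2 * (2 * h) ^ 2 / 2 + A3 * (2 * h) ^ 3 / 6 + A4 * (2 * h) ^ 4 / 24)| ≤ 4 / 3 * K * h ^ 5)
    (hR3 : |D1 - (A1 + A2 * h + A3 * h ^ 2 / 2 + A4 * h ^ 3 / 6)| ≤ K * h ^ 4 / 6)
    (hR4 : |D2X - (A2 + A3 * h + A4 * h ^ 2 / 2)| ≤ K * h ^ 3 / 2)
    (hR5 : |D2P - (A2 + A3 * (2 * h) + A4 * (2 * h) ^ 2 / 2)| ≤ 4 * K * h ^ 3) :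
    |FX * D1 - (1 / 3 * (FX * ((FP - A0) / (2 * h)) + (FP ^ 2 - A0 ^ 2) / (2 * h)) - h ^ 2 / 2 * (1 / 3 * (D2X * ((FP - A0) / (2 * h)) + (D2P * FP - A2 * A0) / (2 * h))))| ≤ 100 * K ^ 2 * h ^ 4 := by
    have hR2h : |(FP - (A0 + A1 * (2 * h) + A2 * (2 * h) ^ 2 / 2 + A3 * (2 * h) ^ 3 / 6 + A4 * (2 * h) ^ 4 / 24)) / h| ≤ 4 / 3 * K * h ^ 4 := by
      rw [abs_div, abs_of_pos hh, div_le_iff₀ hh]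
      calc |FP - (A0 + A1 * (2 * h) + A2 * (2 * h) ^ 2 / 2 + A3 * (2 * h) ^ 3 / 6 + A4 * (2 * h) ^ 4 / 24)| ≤ 4 / 3 * K * h ^ 5 := hR2
        _ = 4 / 3 * K * h ^ 4 * h := by ring
    have tb0 : |-((1/2) * (A0 * ((FP - (A0 + A1 * (2 * h) + A2 * (2 * h) ^ 2 / 2 + A3 * (2 * h) ^ 3 / 6 + A4 * (2 * h) ^ 4 / 24)) / h * h ^ 0)))| ≤ (2/3) * (K ^ 2 * h ^ 4) := by
      rw [abs_neg]
      exact tb_le (p := 4) hh h1 (by norm_num) hA0 hR2h (by ring) (by norm_num) (by norm_num)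
    have tb1 : |1 * (A0 * ((D1 - (A1 + A2 * h + A3 * h ^ 2 / 2 + A4 * h ^ 3 / 6)) * h ^ 0))| ≤ (1/6) * (K ^ 2 * h ^ 4) := by
      exact tb_le (p := 4) hh h1 (by norm_num) hA0 hR3 (by ring) (by norm_num) (by norm_num)
    have tb2 : |(2/3) * (A1 * ((FX - (A0 + A1 * h + A2 * h ^ 2 / 2 + A3 * h ^ 3 / 6 + A4 * h ^ 4 / 24)) * h ^ 0))| ≤ (1/36) * (K ^ 2 * h ^ 4) := by
      exact tb_le (p := 5) hh h1 (by norm_num) hA1 hR1 (by ring) (by norm_num) (by norm_num)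
    have tb3 : |-((5/6) * (A1 * ((FP - (A0 + A1 * (2 * h) + A2 * (2 * h) ^ 2 / 2 + A3 * (2 * h) ^ 3 / 6 + A4 * (2 * h) ^ 4 / 24)) * h ^ 0)))| ≤ (10/9) * (K ^ 2 * h ^ 4) := by
      rw [abs_neg]
      exact tb_le (p := 5) hh h1 (by norm_num) hA1 hR2 (by ring) (by norm_num) (by norm_num)
    have tb4 : |-((1/6) * ((FX - (A0 + A1 * h + A2 * h ^ 2 / 2 + A3 * h ^ 3 / 6 + A4 * h ^ 4 / 24)) * ((FP - (A0 + A1 * (2 * h) + A2 * (2 * h) ^ 2 / 2 + A3 * (2 * h) ^ 3 / 6 + A4 * (2 * h) ^ 4 / 24)) / h * h ^ 0)))| ≤ (1/108) * (K ^ 2 * h ^ 4) := by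
      rw [abs_neg]
      exact tb_le (p := 9) hh h1 (by norm_num) hR1 hR2h (by ring) (by norm_num) (by norm_num)
    have tb5 : |1 * ((FX - (A0 + A1 * h + A2 * h ^ 2 / 2 + A3 * h ^ 3 / 6 + A4 * h ^ 4 / 24)) * ((D1 - (A1 + A2 * h + A3 * h ^ 2 / 2 + A4 * h ^ 3 / 6)) * h ^ 0))| ≤ (1/144) * (K ^ 2 * h ^ 4) := by
      exact tb_le (p := 9) hh h1 (by norm_num) hR1 hR3 (by ring) (by norm_num) (by norm_num)
    have tb6 : |-((1/6) * ((FP - (A0 + A1 * (2 * h) + A2 * (2 * h) ^ 2 / 2 + A3 * (2 * h) ^ 3 / 6 + A4 * (2 * h) ^ 4 / 24)) / h * ((FP - (A0 + A1 * (2 * h) + A2 * (2 * h) ^ 2 / 2 + A3 * (2 * h) ^ 3 / 6 + A4 * (2 * h) ^ 4 / 24)) * h ^ 0)))| ≤ (8/27) * (K ^ 2 * h ^ 4) := by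
      rw [abs_neg]
      exact tb_le (p := 9) hh h1 (by norm_num) hR2h hR2 (by ring) (by norm_num) (by norm_num)
    have tb7 : |(1/12) * (A0 * ((D2P - (A2 + A3 * (2 * h) + A4 * (2 * h) ^ 2 / 2)) * h ^ 1))| ≤ (1/3) * (K ^ 2 * h ^ 4) := by
      exact tb_le (p := 4) hh h1 (by norm_num) hA0 hR5 (by ring) (by norm_num) (by norm_num)
    have tb8 : |1 * (A1 * ((D1 - (A1 + A2 * h + A3 * h ^ 2 / 2 + A4 * h ^ 3 / 6)) * h ^ 1))| ≤ (1/6) * (K ^ 2 * h ^ 4) := by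
      exact tb_le (p := 5) hh h1 (by norm_num) hA1 hR3 (by ring) (by norm_num) (by norm_num)
    have tb9 : |(2/3) * (A2 * ((FX - (A0 + A1 * h + A2 * h ^ 2 / 2 + A3 * h ^ 3 / 6 + A4 * h ^ 4 / 24)) * h ^ 1))| ≤ (1/36) * (K ^ 2 * h ^ 4) := by
      exact tb_le (p := 6) hh h1 (by norm_num) hA2 hR1 (by ring) (by norm_num) (by norm_num)
    have tb10 : |-((7/12) * (A2 * ((FP - (A0 + A1 * (2 * h) + A2 * (2 * h) ^ 2 / 2 + A3 * (2 * h) ^ 3 / 6 + A4 * (2 * h) ^ 4 / 24)) * h ^ 1)))| ≤ (7/9) * (K ^ 2 * h ^ 4) := by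
      rw [abs_neg]
      exact tb_le (p := 6) hh h1 (by norm_num) hA2 hR2 (by ring) (by norm_num) (by norm_num)
    have tb11 : |(1/12) * ((FP - (A0 + A1 * (2 * h) + A2 * (2 * h) ^ 2 / 2 + A3 * (2 * h) ^ 3 / 6 + A4 * (2 * h) ^ 4 / 24)) * ((D2X - (A2 + A3 * h + A4 * h ^ 2 / 2)) * h ^ 1))| ≤ (1/18) * (K ^ 2 * h ^ 4) := by
      exact tb_le (p := 9) hh h1 (by norm_num) hR2 hR4 (by ring) (by norm_num) (by norm_num)
    have tb12 : |(1/12) * ((FP - (A0 + A1 * (2 * h) + A2 * (2 * h) ^ 2 / 2 + A3 * (2 * h) ^ 3 / 6 + A4 * (2 * h) ^ 4 / 24)) * ((D2P - (A2 + A3 * (2 * h) + A4 * (2 * h) ^ 2 / 2)) * h ^ 1))| ≤ (4/9) * (K ^ 2 * h ^ 4) := by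
      exact tb_le (p := 9) hh h1 (by norm_num) hR2 hR5 (by ring) (by norm_num) (by norm_num)
    have tb13 : |(1/6) * (A1 * ((D2X - (A2 + A3 * h + A4 * h ^ 2 / 2)) * h ^ 2))| ≤ (1/12) * (K ^ 2 * h ^ 4) := by
      exact tb_le (p := 5) hh h1 (by norm_num) hA1 hR4 (by ring) (by norm_num) (by norm_num)
    have tb14 : |(1/6) * (A1 * ((D2P - (A2 + A3 * (2 * h) + A4 * (2 * h) ^ 2 / 2)) * h ^ 2))| ≤ (2/3) * (K ^ 2 * h ^ 4) := by
      exact tb_le (p := 5) hh h1 (by norm_num) hA1 hR5 (by ring) (by norm_num) (by norm_num)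
    have tb15 : |(1/2) * (A2 * ((D1 - (A1 + A2 * h + A3 * h ^ 2 / 2 + A4 * h ^ 3 / 6)) * h ^ 2))| ≤ (1/12) * (K ^ 2 * h ^ 4) := by
      exact tb_le (p := 6) hh h1 (by norm_num) hA2 hR3 (by ring) (by norm_num) (by norm_num)
    have tb16 : |(5/18) * (A3 * ((FX - (A0 + A1 * h + A2 * h ^ 2 / 2 + A3 * h ^ 3 / 6 + A4 * h ^ 4 / 24)) * h ^ 2))| ≤ (5/432) * (K ^ 2 * h ^ 4) := by
      exact tb_le (p := 7) hh h1 (by norm_num) hA3 hR1 (by ring) (by norm_num) (by norm_num)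
    have tb17 : |-((2/9) * (A3 * ((FP - (A0 + A1 * (2 * h) + A2 * (2 * h) ^ 2 / 2 + A3 * (2 * h) ^ 3 / 6 + A4 * (2 * h) ^ 4 / 24)) * h ^ 2)))| ≤ (8/27) * (K ^ 2 * h ^ 4) := by
      rw [abs_neg]
      exact tb_le (p := 7) hh h1 (by norm_num) hA3 hR2 (by ring) (by norm_num) (by norm_num)
    have tb18 : |(1/6) * (A2 * ((D2X - (A2 + A3 * h + A4 * h ^ 2 / 2)) * h ^ 3))| ≤ (1/12) * (K ^ 2 * h ^ 4) := by
      exact tb_le (p := 6) hh h1 (by norm_num) hA2 hR4 (by ring) (by norm_num) (by norm_num)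
    have tb19 : |(1/6) * (A2 * ((D2P - (A2 + A3 * (2 * h) + A4 * (2 * h) ^ 2 / 2)) * h ^ 3))| ≤ (2/3) * (K ^ 2 * h ^ 4) := by
      exact tb_le (p := 6) hh h1 (by norm_num) hA2 hR5 (by ring) (by norm_num) (by norm_num)
    have tb20 : |(1/6) * (A3 * ((D1 - (A1 + A2 * h + A3 * h ^ 2 / 2 + A4 * h ^ 3 / 6)) * h ^ 3))| ≤ (1/36) * (K ^ 2 * h ^ 4) := by
      exact tb_le (p := 7) hh h1 (by norm_num) hA3 hR3 (by ring) (by norm_num) (by norm_num)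
    have tb21 : |(1/18) * (A4 * ((FX - (A0 + A1 * h + A2 * h ^ 2 / 2 + A3 * h ^ 3 / 6 + A4 * h ^ 4 / 24)) * h ^ 3))| ≤ (1/432) * (K ^ 2 * h ^ 4) := by
      exact tb_le (p := 8) hh h1 (by norm_num) hA4 hR1 (by ring) (by norm_num) (by norm_num)
    have tb22 : |-((1/48) * (A4 * ((FP - (A0 + A1 * (2 * h) + A2 * (2 * h) ^ 2 / 2 + A3 * (2 * h) ^ 3 / 6 + A4 * (2 * h) ^ 4 / 24)) * h ^ 3)))| ≤ (1/36) * (K ^ 2 * h ^ 4) := by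
      rw [abs_neg]
      exact tb_le (p := 8) hh h1 (by norm_num) hA4 hR2 (by ring) (by norm_num) (by norm_num)
    have tb23 : |(1/18) * (A1 * (A4 * h ^ 4))| ≤ (1/18) * (K ^ 2 * h ^ 4) := by
      exact tb_le (p := 4) hh h1 (by norm_num) hA1 hA4 (by ring) (by norm_num) (by norm_num)
    have tb24 : |(1/12) * (A2 * (A3 * h ^ 4))| ≤ (1/12) * (K ^ 2 * h ^ 4) := by
      exact tb_le (p := 4) hh h1 (by norm_num) hA2 hA3 (by ring) (by norm_num) (by norm_num)
    have tb25 : |(1/9) * (A3 * ((D2X - (A2 + A3 * h + A4 * h ^ 2 / 2)) * h ^ 4))| ≤ (1/18) * (K ^ 2 * h ^ 4) := by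
      exact tb_le (p := 7) hh h1 (by norm_num) hA3 hR4 (by ring) (by norm_num) (by norm_num)
    have tb26 : |(1/9) * (A3 * ((D2P - (A2 + A3 * (2 * h) + A4 * (2 * h) ^ 2 / 2)) * h ^ 4))| ≤ (4/9) * (K ^ 2 * h ^ 4) := by
      exact tb_le (p := 7) hh h1 (by norm_num) hA3 hR5 (by ring) (by norm_num) (by norm_num)
    have tb27 : |(1/24) * (A4 * ((D1 - (A1 + A2 * h + A3 * h ^ 2 / 2 + A4 * h ^ 3 / 6)) * h ^ 4))| ≤ (1/144) * (K ^ 2 * h ^ 4) := by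
      exact tb_le (p := 8) hh h1 (by norm_num) hA4 hR3 (by ring) (by norm_num) (by norm_num)
    have tb28 : |(5/36) * (A2 * (A4 * h ^ 5))| ≤ (5/36) * (K ^ 2 * h ^ 4) := by
      exact tb_le (p := 5) hh h1 (by norm_num) hA2 hA4 (by ring) (by norm_num) (by norm_num)
    have tb29 : |(1/12) * (A3 * (A3 * h ^ 5))| ≤ (1/12) * (K ^ 2 * h ^ 4) := by
      exact tb_le (p := 5) hh h1 (by norm_num) hA3 hA3 (by ring) (by norm_num) (by norm_num)
    have tb30 : |(1/18) * (A4 * ((D2X - (A2 + A3 * h + A4 * h ^ 2 / 2)) * h ^ 5))| ≤ (1/36) * (K ^ 2 * h ^ 4) := by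
      exact tb_le (p := 8) hh h1 (by norm_num) hA4 hR4 (by ring) (by norm_num) (by norm_num)
    have tb31 : |(1/18) * (A4 * ((D2P - (A2 + A3 * (2 * h) + A4 * (2 * h) ^ 2 / 2)) * h ^ 5))| ≤ (2/9) * (K ^ 2 * h ^ 4) := by
      exact tb_le (p := 8) hh h1 (by norm_num) hA4 hR5 (by ring) (by norm_num) (by norm_num)
    have tb32 : |(73/432) * (A3 * (A4 * h ^ 6))| ≤ (73/432) * (K ^ 2 * h ^ 4) := by
      exact tb_le (p := 6) hh h1 (by norm_num) hA3 hA4 (by ring) (by norm_num) (by norm_num)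
    have tb33 : |(29/432) * (A4 * (A4 * h ^ 7))| ≤ (29/432) * (K ^ 2 * h ^ 4) := by
      exact tb_le (p := 7) hh h1 (by norm_num) hA4 hA4 (by ring) (by norm_num) (by norm_num)
    have hEq : FX * D1 - (1 / 3 * (FX * ((FP - A0) / (2 * h)) + (FP ^ 2 - A0 ^ 2) / (2 * h)) - h ^ 2 / 2 * (1 / 3 * (D2X * ((FP - A0) / (2 * h)) + (D2P * FP - A2 * A0) / (2 * h)))) =
      -((1/2) * (A0 * ((FP - (A0 + A1 * (2 * h) + A2 * (2 * h) ^ 2 / 2 + A3 * (2 * h) ^ 3 / 6 + A4 * (2 * h) ^ 4 / 24)) / h * h ^ 0))) +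
      (1 * (A0 * ((D1 - (A1 + A2 * h + A3 * h ^ 2 / 2 + A4 * h ^ 3 / 6)) * h ^ 0))) +
      ((2/3) * (A1 * ((FX - (A0 + A1 * h + A2 * h ^ 2 / 2 + A3 * h ^ 3 / 6 + A4 * h ^ 4 / 24)) * h ^ 0))) +
      -((5/6) * (A1 * ((FP - (A0 + A1 * (2 * h) + A2 * (2 * h) ^ 2 / 2 + A3 * (2 * h) ^ 3 / 6 + A4 * (2 * h) ^ 4 / 24)) * h ^ 0))) +
      -((1/6) * ((FX - (A0 + A1 * h + A2 * h ^ 2 / 2 + A3 * h ^ 3 / 6 + A4 * h ^ 4 / 24)) * ((FP - (A0 + A1 * (2 * h) + A2 * (2 * h) ^ 2 / 2 + A3 * (2 * h) ^ 3 / 6 + A4 * (2 * h) ^ 4 / 24)) / h * h ^ 0))) +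
      (1 * ((FX - (A0 + A1 * h + A2 * h ^ 2 / 2 + A3 * h ^ 3 / 6 + A4 * h ^ 4 / 24)) * ((D1 - (A1 + A2 * h + A3 * h ^ 2 / 2 + A4 * h ^ 3 / 6)) * h ^ 0))) +
      -((1/6) * ((FP - (A0 + A1 * (2 * h) + A2 * (2 * h) ^ 2 / 2 + A3 * (2 * h) ^ 3 / 6 + A4 * (2 * h) ^ 4 / 24)) / h * ((FP - (A0 + A1 * (2 * h) + A2 * (2 * h) ^ 2 / 2 + A3 * (2 * h) ^ 3 / 6 + A4 * (2 * h) ^ 4 / 24)) * h ^ 0))) +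
      ((1/12) * (A0 * ((D2P - (A2 + A3 * (2 * h) + A4 * (2 * h) ^ 2 / 2)) * h ^ 1))) +
      (1 * (A1 * ((D1 - (A1 + A2 * h + A3 * h ^ 2 / 2 + A4 * h ^ 3 / 6)) * h ^ 1))) +
      ((2/3) * (A2 * ((FX - (A0 + A1 * h + A2 * h ^ 2 / 2 + A3 * h ^ 3 / 6 + A4 * h ^ 4 / 24)) * h ^ 1))) +
      -((7/12) * (A2 * ((FP - (A0 + A1 * (2 * h) + A2 * (2 * h) ^ 2 / 2 + A3 * (2 * h) ^ 3 / 6 + A4 * (2 * h) ^ 4 / 24)) * h ^ 1))) +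
      ((1/12) * ((FP - (A0 + A1 * (2 * h) + A2 * (2 * h) ^ 2 / 2 + A3 * (2 * h) ^ 3 / 6 + A4 * (2 * h) ^ 4 / 24)) * ((D2X - (A2 + A3 * h + A4 * h ^ 2 / 2)) * h ^ 1))) +
      ((1/12) * ((FP - (A0 + A1 * (2 * h) + A2 * (2 * h) ^ 2 / 2 + A3 * (2 * h) ^ 3 / 6 + A4 * (2 * h) ^ 4 / 24)) * ((D2P - (A2 + A3 * (2 * h) + A4 * (2 * h) ^ 2 / 2)) * h ^ 1))) +
      ((1/6) * (A1 * ((D2X - (A2 + A3 * h + A4 * h ^ 2 / 2)) * h ^ 2))) +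
      ((1/6) * (A1 * ((D2P - (A2 + A3 * (2 * h) + A4 * (2 * h) ^ 2 / 2)) * h ^ 2))) +
      ((1/2) * (A2 * ((D1 - (A1 + A2 * h + A3 * h ^ 2 / 2 + A4 * h ^ 3 / 6)) * h ^ 2))) +
      ((5/18) * (A3 * ((FX - (A0 + A1 * h + A2 * h ^ 2 / 2 + A3 * h ^ 3 / 6 + A4 * h ^ 4 / 24)) * h ^ 2))) +
      -((2/9) * (A3 * ((FP - (A0 + A1 * (2 * h) + A2 * (2 * h) ^ 2 / 2 + A3 * (2 * h) ^ 3 / 6 + A4 * (2 * h) ^ 4 / 24)) * h ^ 2))) +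
      ((1/6) * (A2 * ((D2X - (A2 + A3 * h + A4 * h ^ 2 / 2)) * h ^ 3))) +
      ((1/6) * (A2 * ((D2P - (A2 + A3 * (2 * h) + A4 * (2 * h) ^ 2 / 2)) * h ^ 3))) +
      ((1/6) * (A3 * ((D1 - (A1 + A2 * h + A3 * h ^ 2 / 2 + A4 * h ^ 3 / 6)) * h ^ 3))) +
      ((1/18) * (A4 * ((FX - (A0 + A1 * h + A2 * h ^ 2 / 2 + A3 * h ^ 3 / 6 + A4 * h ^ 4 / 24)) * h ^ 3))) +
      -((1/48) * (A4 * ((FP - (A0 + A1 * (2 * h) + A2 * (2 * h) ^ 2 / 2 + A3 * (2 * h) ^ 3 / 6 + A4 * (2 * h) ^ 4 / 24)) * h ^ 3))) +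
      ((1/18) * (A1 * (A4 * h ^ 4))) +
      ((1/12) * (A2 * (A3 * h ^ 4))) +
      ((1/9) * (A3 * ((D2X - (A2 + A3 * h + A4 * h ^ 2 / 2)) * h ^ 4))) +
      ((1/9) * (A3 * ((D2P - (A2 + A3 * (2 * h) + A4 * (2 * h) ^ 2 / 2)) * h ^ 4))) +
      ((1/24) * (A4 * ((D1 - (A1 + A2 * h + A3 * h ^ 2 / 2 + A4 * h ^ 3 / 6)) * h ^ 4))) +
      ((5/36) * (A2 * (A4 * h ^ 5))) +
      ((1/12) * (A3 * (A3 * h ^ 5))) +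
      ((1/18) * (A4 * ((D2X - (A2 + A3 * h + A4 * h ^ 2 / 2)) * h ^ 5))) +
      ((1/18) * (A4 * ((D2P - (A2 + A3 * (2 * h) + A4 * (2 * h) ^ 2 / 2)) * h ^ 5))) +
      ((73/432) * (A3 * (A4 * h ^ 6))) +
      ((29/432) * (A4 * (A4 * h ^ 7))) := by
      field_simp
      ring
    rw [hEq]
    refine le_trans ((abs_add_le _ _).trans (add_le_add ((abs_add_le _ _).trans (add_le_add ((abs_add_le _ _).trans (add_le_add ((abs_add_le _ _).trans (add_le_add ((abs_add_le _ _).trans (add_le_add ((abs_add_le _ _).trans (add_le_add ((abs_add_le _ _).trans (add_le_add ((abs_add_le _ _).trans (add_le_add ((abs_add_le _ _).trans (add_le_add ((abs_add_le _ _).trans (add_le_add ((abs_add_le _ _).trans (add_le_add ((abs_add_le _ _).trans (add_le_add ((abs_add_le _ _).trans (add_le_add ((abs_add_le _ _).trans (add_le_add ((abs_add_le _ _).trans (add_le_add ((abs_add_le _ _).trans (add_le_add ((abs_add_le _ _).trans (add_le_add ((abs_add_le _ _).trans (add_le_add ((abs_add_le _ _).trans (add_le_add ((abs_add_le _ _).trans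 (add_le_add ((abs_add_le _ _).trans (add_le_add ((abs_add_le _ _).trans (add_le_add ((abs_add_le _ _).trans (add_le_add ((abs_add_le _ _).trans (add_le_add ((abs_add_le _ _).trans (add_le_add ((abs_add_le _ _).trans (add_le_add ((abs_add_le _ _).trans (add_le_add ((abs_add_le _ _).trans (add_le_add ((abs_add_le _ _).trans (add_le_add ((abs_add_le _ _).trans (add_le_add ((abs_add_le _ _).trans (add_le_add ((abs_add_le _ _).trans (add_le_add ((abs_add_le _ _).trans (add_le_add tb0 tb1)) tb2)) tb3)) tb4)) tb5)) tb6)) tb7)) tb8)) tb9)) tb10)) tb11)) tb12)) tb13)) tb14)) tb15)) tb16)) tb17)) tb18)) tb19)) tb20)) tb21)) tb22)) tb23)) tb24)) tb25)) tb26)) tb27)) tb28)) tb29)) tb30)) tb31)) tb32)) tb33)) ?_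
    have hKh : (0:ℝ) ≤ K ^ 2 * h ^ 4 := by positivity
    linarith

set_option maxHeartbeats 1000000 in
lemma alg2 (h K FX FP FM D1 D2X D2P D2M : ℝ)
    (hh : 0 < h) (h1 : 1 ≤ h) (hK0 : 0 ≤ K)
    (hFX : |FX| ≤ K) (hFP : |FP| ≤ K) (hFM : |FM| ≤ K) (hD1 : |D1| ≤ K)
    (hD2X : |D2X| ≤ K) (hD2P : |D2P| ≤ K) (hD2M : |D2M| ≤ K) :
    |FX * D1 - (1 / 3 * (FX * ((FP - FM) / (2 * h)) + (FP ^ 2 - FM ^ 2) / (2 * h)) - h ^ 2 / 2 * (1 / 3 * (D2X * ((FP - FM) / (2 * h)) + (D2P * FP - D2M * FM) / (2 * h))))| ≤ 100 * K ^ 2 * h ^ 4 := by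
    have hK1 : K ≤ K * h := le_mul_of_one_le_right hK0 h1
    have hFPh : |FP / h| ≤ K := by
      rw [abs_div, abs_of_pos hh, div_le_iff₀ hh]
      exact hFP.trans hK1
    have hFMh : |FM / h| ≤ K := by
      rw [abs_div, abs_of_pos hh, div_le_iff₀ hh]
      exact hFM.trans hK1
    have tb0 : |(1/6) * ((FM / h) * (FM * h ^ 0))| ≤ (1/6) * (K ^ 2 * h ^ 4) := by
      exact tb_ge (p := 0) hh h1 (by norm_num) hFMh hFM (by ring) (by norm_num) (by norm_num)
    have tb1 : |-((1/6) * ((FP / h) * (FP * h ^ 0)))| ≤ (1/6) * (K ^ 2 * h ^ 4) := by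
      rw [abs_neg]
      exact tb_ge (p := 0) hh h1 (by norm_num) hFPh hFP (by ring) (by norm_num) (by norm_num)
    have tb2 : |1 * (FX * (D1 * h ^ 0))| ≤ 1 * (K ^ 2 * h ^ 4) := by
      exact tb_ge (p := 0) hh h1 (by norm_num) hFX hD1 (by ring) (by norm_num) (by norm_num)
    have tb3 : |(1/6) * (FX * ((FM / h) * h ^ 0))| ≤ (1/6) * (K ^ 2 * h ^ 4) := by
      exact tb_ge (p := 0) hh h1 (by norm_num) hFX hFMh (by ring) (by norm_num) (by norm_num)
    have tb4 : |-((1/6) * (FX * ((FP / h) * h ^ 0)))| ≤ (1/6) * (K ^ 2 * h ^ 4) := by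
      rw [abs_neg]
      exact tb_ge (p := 0) hh h1 (by norm_num) hFX hFPh (by ring) (by norm_num) (by norm_num)
    have tb5 : |-((1/12) * (FM * (D2M * h ^ 1)))| ≤ (1/12) * (K ^ 2 * h ^ 4) := by
      rw [abs_neg]
      exact tb_ge (p := 1) hh h1 (by norm_num) hFM hD2M (by ring) (by norm_num) (by norm_num)
    have tb6 : |-((1/12) * (FM * (D2X * h ^ 1)))| ≤ (1/12) * (K ^ 2 * h ^ 4) := by
      rw [abs_neg]
      exact tb_ge (p := 1) hh h1 (by norm_num) hFM hD2X (by ring) (by norm_num) (by norm_num)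
    have tb7 : |(1/12) * (FP * (D2P * h ^ 1))| ≤ (1/12) * (K ^ 2 * h ^ 4) := by
      exact tb_ge (p := 1) hh h1 (by norm_num) hFP hD2P (by ring) (by norm_num) (by norm_num)
    have tb8 : |(1/12) * (FP * (D2X * h ^ 1))| ≤ (1/12) * (K ^ 2 * h ^ 4) := by
      exact tb_ge (p := 1) hh h1 (by norm_num) hFP hD2X (by ring) (by norm_num) (by norm_num)
    have hEq : FX * D1 - (1 / 3 * (FX * ((FP - FM) / (2 * h)) + (FP ^ 2 - FM ^ 2) / (2 * h)) - h ^ 2 / 2 * (1 / 3 * (D2X * ((FP - FM) / (2 * h)) + (D2P * FP - D2M * FM) / (2 * h)))) =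
      ((1/6) * ((FM / h) * (FM * h ^ 0))) +
      -((1/6) * ((FP / h) * (FP * h ^ 0))) +
      (1 * (FX * (D1 * h ^ 0))) +
      ((1/6) * (FX * ((FM / h) * h ^ 0))) +
      -((1/6) * (FX * ((FP / h) * h ^ 0))) +
      -((1/12) * (FM * (D2M * h ^ 1))) +
      -((1/12) * (FM * (D2X * h ^ 1))) +
      ((1/12) * (FP * (D2P * h ^ 1))) +
      ((1/12) * (FP * (D2X * h ^ 1))) := by
      field_simp
      ring
    rw [hEq]
    refine le_trans ((abs_add_le _ _).trans (add_le_add ((abs_add_le _ _).trans (add_le_add ((abs_add_le _ _).trans (add_le_add ((abs_add_le _ _).trans (add_le_add ((abs_add_le _ _).trans (add_le_add ((abs_add_le _ _).trans (add_le_add ((abs_add_le _ _).trans (add_le_add ((abs_add_le _ _).trans (add_le_add tb0 tb1)) tb2)) tb3)) tb4)) tb5)) tb6)) tb7)) tb8)) ?_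
    have hKh : (0:ℝ) ≤ K ^ 2 * h ^ 4 := by positivity
    linarith

end helpers

set_option maxHeartbeats 1000000 in
/-- Lemma 3, first expansion: fourth-order compact approximation of `f f'`. -/
theorem compact_nonlinear :
    ∃ C : ℝ, 0 < C ∧
      ∀ (f : ℝ → ℝ) (x h K : ℝ), 0 < h →
        ContDiffOn ℝ 5 f (Set.Icc (x - h) (x + h)) →
        (∀ y ∈ Set.Icc (x - h) (x + h), ∀ k : ℕ, k ≤ 5 →
          |iteratedDerivWithin k f (Set.Icc (x - h) (x + h)) y| ≤ K) →
        |f x * iteratedDerivWithin 1 f (Set.Icc (x - h) (x + h)) x -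
            ((1 / 3) * (f x * ((f (x + h) - f (x - h)) / (2 * h)) +
                (f (x + h) ^ 2 - f (x - h) ^ 2) / (2 * h)) -
              h ^ 2 / 2 *
                ((1 / 3) * (iteratedDerivWithin 2 f (Set.Icc (x - h) (x + h)) x *
                      ((f (x + h) - f (x - h)) / (2 * h)) +
                    (iteratedDerivWithin 2 f (Set.Icc (x - h) (x + h)) (x + h) * f (x + h) -
                        iteratedDerivWithin 2 f (Set.Icc (x - h) (x + h)) (x - h) * f (x - h)) /
                      (2 * h))))| ≤ C * K ^ 2 * h ^ 4 := by
  refine ⟨100, by norm_num, ?_⟩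
  intro f x h K hh hf hK
  have hab : x - h ≤ x + h := by linarith
  have hlt : x - h < x + h := by linarith
  have hudo : UniqueDiffOn ℝ (Set.Icc (x - h) (x + h)) := uniqueDiffOn_Icc hlt
  have hxm : x - h ∈ Set.Icc (x - h) (x + h) := Set.left_mem_Icc.2 hab
  have hx : x ∈ Set.Icc (x - h) (x + h) := ⟨by linarith, by linarith⟩
  have hxp : x + h ∈ Set.Icc (x - h) (x + h) := Set.right_mem_Icc.2 hab
  have hK0 : 0 ≤ K := (abs_nonneg (f x)).trans (by simpa using hK x hx 0 (by norm_num))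
  have hA0 : |f (x - h)| ≤ K := by simpa using hK (x - h) hxm 0 (by norm_num)
  have hA1 : |iteratedDerivWithin 1 f (Set.Icc (x - h) (x + h)) (x - h)| ≤ K :=
    hK (x - h) hxm 1 (by norm_num)
  have hA2 : |iteratedDerivWithin 2 f (Set.Icc (x - h) (x + h)) (x - h)| ≤ K :=
    hK (x - h) hxm 2 (by norm_num)
  have hA3 : |iteratedDerivWithin 3 f (Set.Icc (x - h) (x + h)) (x - h)| ≤ K :=
    hK (x - h) hxm 3 (by norm_num)
  have hA4 : |iteratedDerivWithin 4 f (Set.Icc (x - h) (x + h)) (x - h)| ≤ K :=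
    hK (x - h) hxm 4 (by norm_num)
  rcases le_or_gt h 1 with h1 | h1
  · -- small h : Taylor expansions around x - h
    have hf5 : ContDiffOn ℝ ((4 : ℕ) + 1) f (Set.Icc (x - h) (x + h)) := by
      exact_mod_cast hf
    have hM5 : ∀ y ∈ Set.Icc (x - h) (x + h),
        |iteratedDerivWithin (4 + 1) f (Set.Icc (x - h) (x + h)) y| ≤ K := fun y hy =>
      hK y hy 5 (by norm_num)
    have hxx : x - (x - h) = h := by ring
    have hxx2 : x + h - (x - h) = 2 * h := by ring
    -- R1 : remainder for f at x
    have hR1 : |f x - (f (x - h) + iteratedDerivWithin 1 f (Set.Icc (x - h) (x + h)) (x - h) * h + iteratedDerivWithin 2 f (Set.Icc (x - h) (x + h)) (x - h) * h ^ 2 / 2 + iteratedDerivWithin 3 f (Set.Icc (x - h) (x + h)) (x - h) * h ^ 3 / 6 + iteratedDerivWithin 4 f (Set.Icc (x - h) (x + h)) (x - h) * h ^ 4 / 24)| ≤ K * h ^ 5 / 24 := by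
      have H := taylor_bd 4 hab hf5 hx hM5
      rw [hxx] at H
      have e : ∑ k ∈ Finset.range (4 + 1),
          h ^ k / (Nat.factorial k : ℝ) *
            iteratedDerivWithin k f (Set.Icc (x - h) (x + h)) (x - h) = f (x - h) + iteratedDerivWithin 1 f (Set.Icc (x - h) (x + h)) (x - h) * h + iteratedDerivWithin 2 f (Set.Icc (x - h) (x + h)) (x - h) * h ^ 2 / 2 + iteratedDerivWithin 3 f (Set.Icc (x - h) (x + h)) (x - h) * h ^ 3 / 6 + iteratedDerivWithin 4 f (Set.Icc (x - h) (x + h)) (x - h) * h ^ 4 / 24 := by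
        simp only [Finset.sum_range_succ, Finset.sum_range_zero, iteratedDerivWithin_zero]
        norm_num [Nat.factorial]
        ring
      rw [e] at H
      calc |f x - (f (x - h) + iteratedDerivWithin 1 f (Set.Icc (x - h) (x + h)) (x - h) * h + iteratedDerivWithin 2 f (Set.Icc (x - h) (x + h)) (x - h) * h ^ 2 / 2 + iteratedDerivWithin 3 f (Set.Icc (x - h) (x + h)) (x - h) * h ^ 3 / 6 + iteratedDerivWithin 4 f (Set.Icc (x - h) (x + h)) (x - h) * h ^ 4 / 24)| ≤ K * h ^ (4 + 1) / (Nat.factorial 4 : ℝ) := H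
        _ = K * h ^ 5 / 24 := by norm_num [Nat.factorial]
    -- R2 : remainder for f at x + h
    have hR2 : |f (x + h) - (f (x - h) + iteratedDerivWithin 1 f (Set.Icc (x - h) (x + h)) (x - h) * (2 * h) + iteratedDerivWithin 2 f (Set.Icc (x - h) (x + h)) (x - h) * (2 * h) ^ 2 / 2 + iteratedDerivWithin 3 f (Set.Icc (x - h) (x + h)) (x - h) * (2 * h) ^ 3 / 6 + iteratedDerivWithin 4 f (Set.Icc (x - h) (x + h)) (x - h) * (2 * h) ^ 4 / 24)| ≤ 4 / 3 * K * h ^ 5 := by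
      have H := taylor_bd 4 hab hf5 hxp hM5
      rw [hxx2] at H
      have e : ∑ k ∈ Finset.range (4 + 1),
          (2 * h) ^ k / (Nat.factorial k : ℝ) *
            iteratedDerivWithin k f (Set.Icc (x - h) (x + h)) (x - h) = f (x - h) + iteratedDerivWithin 1 f (Set.Icc (x - h) (x + h)) (x - h) * (2 * h) + iteratedDerivWithin 2 f (Set.Icc (x - h) (x + h)) (x - h) * (2 * h) ^ 2 / 2 + iteratedDerivWithin 3 f (Set.Icc (x - h) (x + h)) (x - h) * (2 * h) ^ 3 / 6 + iteratedDerivWithin 4 f (Set.Icc (x - h) (x + h)) (x - h) * (2 * h) ^ 4 / 24 := by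
        simp only [Finset.sum_range_succ, Finset.sum_range_zero, iteratedDerivWithin_zero]
        norm_num [Nat.factorial]
        ring
      rw [e] at H
      calc |f (x + h) - (f (x - h) + iteratedDerivWithin 1 f (Set.Icc (x - h) (x + h)) (x - h) * (2 * h) + iteratedDerivWithin 2 f (Set.Icc (x - h) (x + h)) (x - h) * (2 * h) ^ 2 / 2 + iteratedDerivWithin 3 f (Set.Icc (x - h) (x + h)) (x - h) * (2 * h) ^ 3 / 6 + iteratedDerivWithin 4 f (Set.Icc (x - h) (x + h)) (x - h) * (2 * h) ^ 4 / 24)| ≤ K * (2 * h) ^ (4 + 1) / (Nat.factorial 4 : ℝ) := H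
        _ = 4 / 3 * K * h ^ 5 := by norm_num [Nat.factorial]; ring
    -- R3 : remainder for f' at x
    have hg1 : ContDiffOn ℝ (4 : ℕ)
        (iteratedDerivWithin 1 f (Set.Icc (x - h) (x + h))) (Set.Icc (x - h) (x + h)) :=
      contDiffOn_iter hudo (n := 5) (i := 1) (by exact_mod_cast hf) (by norm_num)
    have hM4 : ∀ y ∈ Set.Icc (x - h) (x + h),
        |iteratedDerivWithin (3 + 1) (iteratedDerivWithin 1 f (Set.Icc (x - h) (x + h)))
          (Set.Icc (x - h) (x + h)) y| ≤ K := fun y hy => by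
      rw [iter_comp' hudo (by norm_num : 4 + 1 = 5) hy]
      exact hK y hy 5 (by norm_num)
    have hR3 : |iteratedDerivWithin 1 f (Set.Icc (x - h) (x + h)) x - (iteratedDerivWithin 1 f (Set.Icc (x - h) (x + h)) (x - h) + iteratedDerivWithin 2 f (Set.Icc (x - h) (x + h)) (x - h) * h + iteratedDerivWithin 3 f (Set.Icc (x - h) (x + h)) (x - h) * h ^ 2 / 2 + iteratedDerivWithin 4 f (Set.Icc (x - h) (x + h)) (x - h) * h ^ 3 / 6)| ≤ K * h ^ 4 / 6 := by
      have H := taylor_bd 3 hab hg1 hx hM4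
      rw [hxx] at H
      have e : ∑ k ∈ Finset.range (3 + 1),
          h ^ k / (Nat.factorial k : ℝ) *
            iteratedDerivWithin k (iteratedDerivWithin 1 f (Set.Icc (x - h) (x + h)))
              (Set.Icc (x - h) (x + h)) (x - h) = iteratedDerivWithin 1 f (Set.Icc (x - h) (x + h)) (x - h) + iteratedDerivWithin 2 f (Set.Icc (x - h) (x + h)) (x - h) * h + iteratedDerivWithin 3 f (Set.Icc (x - h) (x + h)) (x - h) * h ^ 2 / 2 + iteratedDerivWithin 4 f (Set.Icc (x - h) (x + h)) (x - h) * h ^ 3 / 6 := by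
        simp only [Finset.sum_range_succ, Finset.sum_range_zero, iteratedDerivWithin_zero]
        rw [iter_comp' hudo (by norm_num : 1 + 1 = 2) hxm,
          iter_comp' hudo (by norm_num : 2 + 1 = 3) hxm,
          iter_comp' hudo (by norm_num : 3 + 1 = 4) hxm]
        norm_num [Nat.factorial]
        ring
      rw [e] at H
      calc |iteratedDerivWithin 1 f (Set.Icc (x - h) (x + h)) x - (iteratedDerivWithin 1 f (Set.Icc (x - h) (x + h)) (x - h) + iteratedDerivWithin 2 f (Set.Icc (x - h) (x + h)) (x - h) * h + iteratedDerivWithin 3 f (Set.Icc (x - h) (x + h)) (x - h) * h ^ 2 / 2 + iteratedDerivWithin 4 f (Set.Icc (x - h) (x + h)) (x - h) * h ^ 3 / 6)|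
          ≤ K * h ^ (3 + 1) / (Nat.factorial 3 : ℝ) := H
        _ = K * h ^ 4 / 6 := by norm_num [Nat.factorial]
    -- R4, R5 : remainders for f'' at x and x + h
    have hg2 : ContDiffOn ℝ (3 : ℕ)
        (iteratedDerivWithin 2 f (Set.Icc (x - h) (x + h))) (Set.Icc (x - h) (x + h)) :=
      contDiffOn_iter hudo (n := 5) (i := 2) (by exact_mod_cast hf) (by norm_num)
    have hM3 : ∀ y ∈ Set.Icc (x - h) (x + h),
        |iteratedDerivWithin (2 + 1) (iteratedDerivWithin 2 f (Set.Icc (x - h) (x + h)))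
          (Set.Icc (x - h) (x + h)) y| ≤ K := fun y hy => by
      rw [iter_comp' hudo (by norm_num : 3 + 2 = 5) hy]
      exact hK y hy 5 (by norm_num)
    have e2sum : ∀ z ∈ Set.Icc (x - h) (x + h), ∑ k ∈ Finset.range (2 + 1),
        (z - (x - h)) ^ k / (Nat.factorial k : ℝ) *
          iteratedDerivWithin k (iteratedDerivWithin 2 f (Set.Icc (x - h) (x + h)))
            (Set.Icc (x - h) (x + h)) (x - h)
        = iteratedDerivWithin 2 f (Set.Icc (x - h) (x + h)) (x - h)
          + iteratedDerivWithin 3 f (Set.Icc (x - h) (x + h)) (x - h) * (z - (x - h))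
          + iteratedDerivWithin 4 f (Set.Icc (x - h) (x + h)) (x - h) * (z - (x - h)) ^ 2 / 2 := by
      intro z hz
      simp only [Finset.sum_range_succ, Finset.sum_range_zero, iteratedDerivWithin_zero]
      rw [iter_comp' hudo (by norm_num : 1 + 2 = 3) hxm,
        iter_comp' hudo (by norm_num : 2 + 2 = 4) hxm]
      norm_num [Nat.factorial]
      ring
    have hR4 : |iteratedDerivWithin 2 f (Set.Icc (x - h) (x + h)) x - (iteratedDerivWithin 2 f (Set.Icc (x - h) (x + h)) (x - h) + iteratedDerivWithin 3 f (Set.Icc (x - h) (x + h)) (x - h) * h + iteratedDerivWithin 4 f (Set.Icc (x - h) (x + h)) (x - h) * h ^ 2 / 2)| ≤ K * h ^ 3 / 2 := by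
      have H := taylor_bd 2 hab hg2 hx hM3
      rw [e2sum x hx, hxx] at H
      calc |iteratedDerivWithin 2 f (Set.Icc (x - h) (x + h)) x - (iteratedDerivWithin 2 f (Set.Icc (x - h) (x + h)) (x - h) + iteratedDerivWithin 3 f (Set.Icc (x - h) (x + h)) (x - h) * h + iteratedDerivWithin 4 f (Set.Icc (x - h) (x + h)) (x - h) * h ^ 2 / 2)|
          ≤ K * h ^ (2 + 1) / (Nat.factorial 2 : ℝ) := H
        _ = K * h ^ 3 / 2 := by norm_num [Nat.factorial]
    have hR5 : |iteratedDerivWithin 2 f (Set.Icc (x - h) (x + h)) (x + h) - (iteratedDerivWithin 2 f (Set.Icc (x - h) (x + h)) (x - h) + iteratedDerivWithin 3 f (Set.Icc (x - h) (x + h)) (x - h) * (2 * h) + iteratedDerivWithin 4 f (Set.Icc (x - h) (x + h)) (x - h) * (2 * h) ^ 2 / 2)|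
        ≤ 4 * K * h ^ 3 := by
      have H := taylor_bd 2 hab hg2 hxp hM3
      rw [e2sum (x + h) hxp, hxx2] at H
      calc |iteratedDerivWithin 2 f (Set.Icc (x - h) (x + h)) (x + h) - (iteratedDerivWithin 2 f (Set.Icc (x - h) (x + h)) (x - h) + iteratedDerivWithin 3 f (Set.Icc (x - h) (x + h)) (x - h) * (2 * h) + iteratedDerivWithin 4 f (Set.Icc (x - h) (x + h)) (x - h) * (2 * h) ^ 2 / 2)|
          ≤ K * (2 * h) ^ (2 + 1) / (Nat.factorial 2 : ℝ) := H
        _ = 4 * K * h ^ 3 := by norm_num [Nat.factorial]; ring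
    exact alg1 h K (f (x - h))
      (iteratedDerivWithin 1 f (Set.Icc (x - h) (x + h)) (x - h))
      (iteratedDerivWithin 2 f (Set.Icc (x - h) (x + h)) (x - h))
      (iteratedDerivWithin 3 f (Set.Icc (x - h) (x + h)) (x - h))
      (iteratedDerivWithin 4 f (Set.Icc (x - h) (x + h)) (x - h))
      (f x) (f (x + h))
      (iteratedDerivWithin 1 f (Set.Icc (x - h) (x + h)) x)
      (iteratedDerivWithin 2 f (Set.Icc (x - h) (x + h)) x)
      (iteratedDerivWithin 2 f (Set.Icc (x - h) (x + h)) (x + h))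
      hh h1 hK0 hA0 hA1 hA2 hA3 hA4 hR1 hR2 hR3 hR4 hR5
  · -- large h : direct bounds
    have hFX : |f x| ≤ K := by simpa using hK x hx 0 (by norm_num)
    have hFP : |f (x + h)| ≤ K := by simpa using hK (x + h) hxp 0 (by norm_num)
    have hD1 : |iteratedDerivWithin 1 f (Set.Icc (x - h) (x + h)) x| ≤ K :=
      hK x hx 1 (by norm_num)
    have hD2X : |iteratedDerivWithin 2 f (Set.Icc (x - h) (x + h)) x| ≤ K :=
      hK x hx 2 (by norm_num)
    have hD2P : |iteratedDerivWithin 2 f (Set.Icc (x - h) (x + h)) (x + h)| ≤ K :=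
      hK (x + h) hxp 2 (by norm_num)
    exact alg2 h K (f x) (f (x + h)) (f (x - h))
      (iteratedDerivWithin 1 f (Set.Icc (x - h) (x + h)) x)
      (iteratedDerivWithin 2 f (Set.Icc (x - h) (x + h)) x)
      (iteratedDerivWithin 2 f (Set.Icc (x - h) (x + h)) (x + h))
      (iteratedDerivWithin 2 f (Set.Icc (x - h) (x + h)) (x - h))
      hh h1.le hK0 hFX hFP hA0 hD1 hD2X hD2P hA2


end BBMB
end

section
/- Let M be a positive integer, h > 0, and let u, v, S be periodic grid functions satisfying the reduction relation v_i = δ_x² u_i − (h²/12)·δ_x² v_i + S_i for all i. Then (v, u) ≤ −|u|₁² − (h²/18)·‖v‖² + (h²/12)·(v, S) + (S, u). (Lemma 4, inequality (lem4-2).) -/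
open Finset

namespace BBMB

section Aux

private lemma sum_shift (M : ℕ) (hM : 0 < M) (f : ℤ → ℝ)
    (hf : ∀ i : ℤ, f (i + (M : ℤ)) = f i) :
    ∑ i ∈ Finset.Icc (1 : ℤ) (M : ℤ), f (i + 1)
      = ∑ i ∈ Finset.Icc (1 : ℤ) (M : ℤ), f i := by
  have hM1 : (1 : ℤ) ≤ (M : ℤ) := by exact_mod_cast hM
  have e1 : ∑ i ∈ Finset.Icc (1 : ℤ) (M : ℤ), f (i + 1)
      = ∑ i ∈ Finset.Icc (2 : ℤ) ((M : ℤ) + 1), f i := by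
    rw [show Finset.Icc (2 : ℤ) ((M : ℤ) + 1)
        = (Finset.Icc (1 : ℤ) (M : ℤ)).map (addRightEmbedding 1) by
      rw [Finset.map_add_right_Icc]; norm_num]
    rw [Finset.sum_map]
    rfl
  have e2 : Finset.Icc (2 : ℤ) ((M : ℤ) + 1) = insert ((M : ℤ) + 1) (Finset.Icc 2 (M : ℤ)) := by
    ext x; simp only [Finset.mem_Icc, Finset.mem_insert]; omega
  have e3 : Finset.Icc (1 : ℤ) (M : ℤ) = insert 1 (Finset.Icc 2 (M : ℤ)) := by
    ext x; simp only [Finset.mem_Icc, Finset.mem_insert]; omega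
  have hnot1 : ((M : ℤ) + 1) ∉ Finset.Icc (2 : ℤ) (M : ℤ) := by
    simp only [Finset.mem_Icc]; omega
  have hnot2 : (1 : ℤ) ∉ Finset.Icc (2 : ℤ) (M : ℤ) := by
    simp only [Finset.mem_Icc]; omega
  have hend : f ((M : ℤ) + 1) = f 1 := by
    rw [show (M : ℤ) + 1 = 1 + (M : ℤ) by ring, hf 1]
  rw [e1, e2, Finset.sum_insert hnot1, hend, e3, Finset.sum_insert hnot2]

private lemma dxm_periodic {M : ℕ} {h : ℝ} {w : ℤ → ℝ} (hw : Periodic M w) :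
    Periodic M (dxm h w) := by
  intro i
  simp only [dxm]
  rw [hw, show i + (M : ℤ) - 1 = (i - 1) + (M : ℤ) by ring, hw]

private lemma sbp (M : ℕ) (h : ℝ) (hM : 0 < M) (hh : 0 < h) (w z : ℤ → ℝ)
    (hw : Periodic M w) (hz : Periodic M z) :
    ip M h (dxx h w) z = - dip M h w z := by
  have hh0 : h ≠ 0 := ne_of_gt hh
  set f : ℤ → ℝ := fun i => dxm h w i * z (i - 1) with hfdef
  have hfp : ∀ i : ℤ, f (i + (M : ℤ)) = f i := by
    intro i
    simp only [hfdef]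
    rw [dxm_periodic hw, show i + (M : ℤ) - 1 = (i - 1) + (M : ℤ) by ring, hz]
  have key : ∀ i : ℤ, dxx h w i * z i = (f (i + 1) - f i) / h - dxm h w i * dxm h z i := by
    intro i
    simp only [hfdef, dxx, dxm, add_sub_cancel_right]
    field_simp
    ring
  unfold ip dip
  rw [Finset.sum_congr rfl (fun i _ => key i), Finset.sum_sub_distrib]
  have hzero : ∑ i ∈ Finset.Icc (1 : ℤ) (M : ℤ), (f (i + 1) - f i) / h = 0 := by
    have : ∑ i ∈ Finset.Icc (1 : ℤ) (M : ℤ), (f (i + 1) - f i) / h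
        = (∑ i ∈ Finset.Icc (1 : ℤ) (M : ℤ), f (i + 1)
            - ∑ i ∈ Finset.Icc (1 : ℤ) (M : ℤ), f i) / h := by
      rw [← Finset.sum_sub_distrib, ← Finset.sum_div]
    rw [this, sum_shift M hM f hfp, sub_self, zero_div]
  rw [hzero]
  ring

private lemma ip_comm (M : ℕ) (h : ℝ) (a b : ℤ → ℝ) : ip M h a b = ip M h b a := by
  unfold ip
  congr 1
  exact Finset.sum_congr rfl fun i _ => mul_comm _ _

private lemma dip_comm (M : ℕ) (h : ℝ) (a b : ℤ → ℝ) : dip M h a b = dip M h b a := by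
  unfold dip
  congr 1
  exact Finset.sum_congr rfl fun i _ => mul_comm _ _

private lemma ip_self_nonneg (M : ℕ) (h : ℝ) (hh : 0 ≤ h) (a : ℤ → ℝ) : 0 ≤ ip M h a a :=
  mul_nonneg hh (Finset.sum_nonneg fun i _ => mul_self_nonneg _)

private lemma dip_self_nonneg (M : ℕ) (h : ℝ) (hh : 0 ≤ h) (a : ℤ → ℝ) : 0 ≤ dip M h a a :=
  mul_nonneg hh (Finset.sum_nonneg fun i _ => mul_self_nonneg _)

private lemma inverse_ineq (M : ℕ) (h : ℝ) (hM : 0 < M) (hh : 0 < h) (v : ℤ → ℝ)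
    (hv : Periodic M v) : h ^ 2 * dip M h v v ≤ 4 * ip M h v v := by
  have hh0 : h ≠ 0 := ne_of_gt hh
  have shift : ∑ i ∈ Finset.Icc (1 : ℤ) (M : ℤ), v (i - 1) * v (i - 1)
      = ∑ i ∈ Finset.Icc (1 : ℤ) (M : ℤ), v i * v i := by
    have := sum_shift M hM (fun i => v (i - 1) * v (i - 1)) (fun i => by
      show v (i + (M : ℤ) - 1) * v (i + (M : ℤ) - 1) = v (i - 1) * v (i - 1)
      rw [show i + (M : ℤ) - 1 = (i - 1) + (M : ℤ) by ring, hv])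
    simp only [add_sub_cancel_right] at this
    exact this.symm
  have hp : ∀ i ∈ Finset.Icc (1 : ℤ) (M : ℤ),
      dxm h v i * dxm h v i ≤ 2 / h ^ 2 * (v i * v i + v (i - 1) * v (i - 1)) := by
    intro i _
    have key : (v i - v (i - 1)) * (v i - v (i - 1))
        ≤ 2 * (v i * v i + v (i - 1) * v (i - 1)) := by
      nlinarith [sq_nonneg (v i + v (i - 1))]
    have h2 : (0 : ℝ) < h * h := by positivity
    have heq : dxm h v i * dxm h v i = (v i - v (i - 1)) * (v i - v (i - 1)) / (h * h) := by
      simp only [dxm, div_mul_div_comm]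
    rw [heq, show 2 / h ^ 2 * (v i * v i + v (i - 1) * v (i - 1))
        = 2 * (v i * v i + v (i - 1) * v (i - 1)) / (h * h) by rw [pow_two]; ring]
    exact div_le_div_of_nonneg_right key h2.le
  have hsum : ∑ i ∈ Finset.Icc (1 : ℤ) (M : ℤ), dxm h v i * dxm h v i
      ≤ ∑ i ∈ Finset.Icc (1 : ℤ) (M : ℤ), 2 / h ^ 2 * (v i * v i + v (i - 1) * v (i - 1)) :=
    Finset.sum_le_sum hp
  have expand : ∑ i ∈ Finset.Icc (1 : ℤ) (M : ℤ), 2 / h ^ 2 * (v i * v i + v (i - 1) * v (i - 1))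
      = 2 / h ^ 2 * (∑ i ∈ Finset.Icc (1 : ℤ) (M : ℤ), v i * v i
          + ∑ i ∈ Finset.Icc (1 : ℤ) (M : ℤ), v (i - 1) * v (i - 1)) := by
    rw [← Finset.mul_sum, Finset.sum_add_distrib]
  rw [expand, shift] at hsum
  unfold ip dip
  have h3 : 0 ≤ h ^ 2 * h := by positivity
  calc h ^ 2 * (h * ∑ i ∈ Finset.Icc (1 : ℤ) (M : ℤ), dxm h v i * dxm h v i)
      ≤ h ^ 2 * (h * (2 / h ^ 2 * (∑ i ∈ Finset.Icc (1 : ℤ) (M : ℤ), v i * v i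
          + ∑ i ∈ Finset.Icc (1 : ℤ) (M : ℤ), v i * v i))) := by
        have := mul_le_mul_of_nonneg_left hsum (le_of_lt hh)
        exact mul_le_mul_of_nonneg_left this (by positivity)
    _ = 4 * (h * ∑ i ∈ Finset.Icc (1 : ℤ) (M : ℤ), v i * v i) := by
        field_simp; ring

end Aux

/-- Lemma 4, inequality (lem4-2). -/
theorem reduction_inner_inequality (M : ℕ) (h : ℝ) (u v S : ℤ → ℝ)
    (hM : 0 < M) (hh : 0 < h)
    (hu : Periodic M u) (hv : Periodic M v) (hS : Periodic M S)
    (hrel : ∀ i : ℤ, v i = dxx h u i - h ^ 2 / 12 * dxx h v i + S i) :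
    ip M h v u ≤
      -(snorm M h u) ^ 2 - h ^ 2 / 18 * (nrm M h v) ^ 2
        + h ^ 2 / 12 * ip M h v S + ip M h S u := by
  have hh0 : h ≠ 0 := ne_of_gt hh
  have sbpuu := sbp M h hM hh u u hu hu
  have sbpvu := sbp M h hM hh v u hv hu
  have sbpuv := sbp M h hM hh u v hu hv
  have sbpvv := sbp M h hM hh v v hv hv
  have hA : ip M h v u = ip M h (dxx h u) u - h ^ 2 / 12 * ip M h (dxx h v) u + ip M h S u := by
    unfold ip
    rw [Finset.sum_congr rfl (fun i _ => by
      rw [hrel i]; ring :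
        ∀ i ∈ Finset.Icc (1 : ℤ) (M : ℤ), v i * u i
          = dxx h u i * u i - h ^ 2 / 12 * (dxx h v i * u i) + S i * u i),
      Finset.sum_add_distrib, Finset.sum_sub_distrib, ← Finset.mul_sum]
    ring
  have hB : ip M h (dxx h u) v
      = ip M h v v + h ^ 2 / 12 * ip M h (dxx h v) v - ip M h S v := by
    unfold ip
    rw [Finset.sum_congr rfl (fun i _ => by
      have h0 : dxx h u i = v i + h ^ 2 / 12 * dxx h v i - S i := by linarith [hrel i]
      rw [h0]; ring :
        ∀ i ∈ Finset.Icc (1 : ℤ) (M : ℤ), dxx h u i * v i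
          = v i * v i + h ^ 2 / 12 * (dxx h v i * v i) - S i * v i),
      Finset.sum_sub_distrib, Finset.sum_add_distrib, ← Finset.mul_sum]
    ring
  have hdipvu : dip M h v u = - ip M h v v + h ^ 2 / 12 * dip M h v v + ip M h v S := by
    have h1 : dip M h v u = - ip M h (dxx h u) v := by
      rw [dip_comm M h v u]; linarith [sbpuv]
    rw [h1, hB, sbpvv, ip_comm M h S v]
    ring
  have inv := inverse_ineq M h hM hh v hv
  have hsn : (snorm M h u) ^ 2 = dip M h u u := Real.sq_sqrt (dip_self_nonneg M h hh.le u)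
  have hnr : (nrm M h v) ^ 2 = ip M h v v := Real.sq_sqrt (ip_self_nonneg M h hh.le v)
  have key : h ^ 2 / 144 * (h ^ 2 * dip M h v v) ≤ h ^ 2 / 144 * (4 * ip M h v v) :=
    mul_le_mul_of_nonneg_left inv (by positivity)
  rw [hA, sbpuu, sbpvu, hsn, hnr]
  rw [hdipvu]
  nlinarith [key]


end BBMB
end
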